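/- Let G = (V,E) be a finite undirected graph, φ ∈ (0,1), h a positive integer, A ⊆ V, and Δ : A → ℝ_{≥0}, and let (Δ, f, l) be a valid solution for G{A}. Let k ≥ 1, S = {v ∈ A : l(v) ≥ k}, and A' = A∖S. Define Δ'(u) = Δ(u) + (2/φ)·|E_G({u}, S)| for u ∈ A', and let f' and l' be the restrictions of f and l to A'×A' and A' respectively. Then (Δ', f', l') is a valid state for G{A'}. -/
import Mathlib


/-!
STATEMENT 10 (validity is preserved between rounds of dynamic Unit-Flow):
Let `(Δ, f, l)` be a valid solution for `G{A}`, `k ≥ 1`, `S = {v ∈ A : l(v) ≥ k}`,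
`A' = A∖S`. With `Δ'(u) = Δ(u) + (2/φ)·|E_G({u}, S)|` and `f'`, `l'` the restrictions
of `f`, `l` to `A'×A'` and `A'`, the tuple `(Δ', f', l')` is a valid state for `G{A'}`.
-/

open Finset

noncomputable section
open scoped Classical

/-- `|E_G(S,T)|`: the number of edges of `G` with one endpoint in `S` and the other in `T`. -/
def eCount {V : Type*} [Fintype V] [DecidableEq V] (G : SimpleGraph V) (S T : Finset V) : ℕ :=
  ((S ×ˢ T).filter fun p => G.Adj p.1 p.2).card

/-- `f` is a pre-flow on `G[A]` for source `Δ`. -/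
def IsPreflow {V : Type*} [Fintype V] [DecidableEq V] (G : SimpleGraph V) (φ : ℝ)
    (A : Finset V) (Δ : V → ℝ) (f : V → V → ℝ) : Prop :=
  (∀ u v, f u v = - f v u) ∧
  (∀ u v, ¬(u ∈ A ∧ v ∈ A ∧ G.Adj u v) → f u v = 0) ∧
  (∀ u ∈ A, ∀ v ∈ A, G.Adj u v → |f u v| ≤ 2 / φ) ∧
  (∀ v ∈ A, ∑ u ∈ A, f v u ≤ Δ v)

/-- `f(v) = Δ(v) + ∑_u f(u,v)`. -/
def mass {V : Type*} [Fintype V] [DecidableEq V] (A : Finset V)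
    (Δ : V → ℝ) (f : V → V → ℝ) (v : V) : ℝ :=
  Δ v + ∑ u ∈ A, f u v

/-- `(Δ, f, l)` is a valid state for `G{A}`. -/
def ValidState {V : Type*} [Fintype V] [DecidableEq V] (G : SimpleGraph V) (φ : ℝ) (h : ℕ)
    (A : Finset V) (Δ : V → ℝ) (f : V → V → ℝ) (l : V → ℕ) : Prop :=
  IsPreflow G φ A Δ f ∧
  (∀ v ∈ A, l v ≤ h) ∧
  (∀ u ∈ A, ∀ v ∈ A, G.Adj u v → l v + 1 < l u → f u v = 2 / φ) ∧
  (∀ u ∈ A, 1 ≤ l u → (G.degree u : ℝ) ≤ mass A Δ f u)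

/-- `(Δ, f, l)` is a valid solution for `G{A}`. -/
def ValidSolution {V : Type*} [Fintype V] [DecidableEq V] (G : SimpleGraph V) (φ : ℝ)
    (h : ℕ) (A : Finset V) (Δ : V → ℝ) (f : V → V → ℝ) (l : V → ℕ) : Prop :=
  ValidState G φ h A Δ f l ∧
  (∀ u ∈ A, l u < h → mass A Δ f u ≤ (G.degree u : ℝ))

theorem valid_state_after_trim
    {V : Type*} [Fintype V] [DecidableEq V] (G : SimpleGraph V) (φ : ℝ) (h : ℕ)
    (A : Finset V) (Δ : V → ℝ) (f : V → V → ℝ) (l : V → ℕ) (k : ℕ)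
    (hφ0 : 0 < φ) (hφ1 : φ < 1) (hh : 0 < h) (hk : 1 ≤ k)
    (hΔ0 : ∀ v, 0 ≤ Δ v)
    (hsol : ValidSolution G φ h A Δ f l)
    (S : Finset V) (hS : S = A.filter fun v => k ≤ l v)
    (A' : Finset V) (hA' : A' = A \ S)
    (Δ' : V → ℝ) (hΔ' : ∀ u, Δ' u = Δ u + (2 / φ) * (eCount G {u} S : ℝ))
    (f' : V → V → ℝ) (hf' : ∀ u v, f' u v = if u ∈ A' ∧ v ∈ A' then f u v else 0) :
    ValidState G φ h A' Δ' f' l := by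
  obtain ⟨⟨⟨hanti, hzero, hbound, hexcess⟩, hlh, hedge, hmass⟩, _⟩ := hsol
  have hSsub : S ⊆ A := by rw [hS]; exact Finset.filter_subset _ _
  have hA'sub : A' ⊆ A := by rw [hA']; exact Finset.sdiff_subset
  have hφ : (0:ℝ) ≤ 2 / φ := by positivity
  have hcount : ∀ v, ((eCount G {v} S : ℕ) : ℝ) = ((S.filter fun u => G.Adj v u).card : ℝ) := by
    intro v
    have : ({v} ×ˢ S).filter (fun p => G.Adj p.1 p.2)
        = {v} ×ˢ (S.filter fun u => G.Adj v u) := by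
      ext ⟨a, b⟩
      simp only [Finset.mem_filter, Finset.mem_product, Finset.mem_singleton]
      constructor
      · rintro ⟨⟨rfl, hb⟩, hadj⟩; exact ⟨rfl, hb, hadj⟩
      · rintro ⟨rfl, hb, hadj⟩; exact ⟨⟨rfl, hb⟩, hadj⟩
    rw [eCount, this, Finset.card_product, Finset.card_singleton, one_mul]
  -- bound on sum over S of |f u v|
  have hSbound : ∀ v ∈ A', ∑ u ∈ S, |f u v| ≤ (2 / φ) * (eCount G {v} S : ℝ) := by
    intro v hv
    rw [hcount]
    calc ∑ u ∈ S, |f u v| ≤ ∑ u ∈ S, (if G.Adj v u then 2 / φ else 0) := by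
          apply Finset.sum_le_sum
          intro u hu
          by_cases hadj : G.Adj v u
          · simp only [hadj, if_true]
            exact hbound u (hSsub hu) v (hA'sub hv) hadj.symm
          · simp only [hadj, if_false]
            have : f u v = 0 := by
              apply hzero
              rintro ⟨_, _, h'⟩
              exact hadj h'.symm
            simp [this]
      _ = (2 / φ) * ((S.filter fun u => G.Adj v u).card : ℝ) := by
          rw [Finset.sum_ite, Finset.sum_const, Finset.sum_const_zero, add_zero]
          simp [mul_comm]
  have hsplit : ∀ g : V → ℝ, ∑ u ∈ A, g u = ∑ u ∈ A', g u + ∑ u ∈ S, g u := by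
    intro g
    rw [hA', Finset.sum_sdiff hSsub]
  refine ⟨⟨?_, ?_, ?_, ?_⟩, ?_, ?_, ?_⟩
  · intro u v
    rw [hf', hf']
    by_cases hc : u ∈ A' ∧ v ∈ A'
    · have hc' : v ∈ A' ∧ u ∈ A' := ⟨hc.2, hc.1⟩
      simp [hc, hc', hanti u v]
    · have hc' : ¬(v ∈ A' ∧ u ∈ A') := fun h' => hc ⟨h'.2, h'.1⟩
      simp [hc, hc']
  · intro u v hne
    rw [hf']
    split
    · rename_i hmem
      apply hzero
      rintro ⟨hu, hv, hadj⟩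
      exact hne ⟨hmem.1, hmem.2, hadj⟩
    · rfl
  · intro u hu v hv hadj
    rw [hf']
    simp only [hu, hv, and_self, if_true]
    exact hbound u (hA'sub hu) v (hA'sub hv) hadj
  · intro v hv
    have h1 : ∑ u ∈ A', f' v u = ∑ u ∈ A', f v u := by
      apply Finset.sum_congr rfl
      intro u hu
      rw [hf']
      simp [hv, hu]
    have h2 : ∑ u ∈ A', f v u = ∑ u ∈ A, f v u - ∑ u ∈ S, f v u := by
      rw [hsplit (fun u => f v u)]; ring
    have h3 : - ∑ u ∈ S, f v u ≤ (2 / φ) * (eCount G {v} S : ℝ) := by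
      calc - ∑ u ∈ S, f v u ≤ ∑ u ∈ S, |f v u| := by
            rw [← Finset.sum_neg_distrib]
            exact Finset.sum_le_sum fun u _ => neg_le_abs _
        _ = ∑ u ∈ S, |f u v| := by
            apply Finset.sum_congr rfl
            intro u _
            rw [hanti u v, abs_neg]
        _ ≤ _ := hSbound v hv
    rw [h1, h2, hΔ']
    have h4 := hexcess v (hA'sub hv)
    linarith
  · intro v hv; exact hlh v (hA'sub hv)
  · intro u hu v hv hadj hl
    rw [hf']
    simp only [hu, hv, and_self, if_true]
    exact hedge u (hA'sub hu) v (hA'sub hv) hadj hl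
  · intro u hu hl
    have h1 : mass A' Δ' f' u = Δ u + (2 / φ) * (eCount G {u} S : ℝ) + ∑ v ∈ A', f v u := by
      unfold mass
      rw [hΔ']
      congr 1
      apply Finset.sum_congr rfl
      intro v hv
      rw [hf']
      simp [hu, hv]
    have h2 : mass A Δ f u = Δ u + ∑ v ∈ A', f v u + ∑ v ∈ S, f v u := by
      unfold mass
      rw [hsplit (fun v => f v u)]; ring
    have h3 : ∑ v ∈ S, f v u ≤ (2 / φ) * (eCount G {u} S : ℝ) := by
      calc ∑ v ∈ S, f v u ≤ ∑ v ∈ S, |f v u| :=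
            Finset.sum_le_sum fun v _ => le_abs_self _
        _ ≤ _ := hSbound u hu
    have h4 := hmass u (hA'sub hu) hl
    rw [h1]
    linarith
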